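/- arXiv:2106.11922 — 3 statements merged into one kernel-verified Lean document; each statement's English description precedes it below -/
import Mathlib

section
/- For every k ≥ 0, ∑_{ν partition : ν₁ = k} z^{2·odd(ν')} q^{|ν|} = [qz² + q²]_{q²}^k / (q²;q²)_k, where odd(ν') denotes the number of odd-length columns of ν and [A+B]_p^k = ∑_{j=0}^{k} A^j B^{k−j} · binom_p(k,j) with binom_p the Gaussian (p-)binomial coefficient. -/
/-- Integer partitions, encoded as weakly decreasing eventually-zero sequences
`ν₁ = f 0, ν₂ = f 1, …`. -/
abbrev YD : Type := {f : ℕ → ℕ // (∀ i j : ℕ, i ≤ j → f j ≤ f i) ∧ ∃ N, f N = 0}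

/-- The size `|ν|` of a partition. -/
noncomputable def psize (f : ℕ → ℕ) : ℕ := ∑ᶠ i, f i

/-- `conj f c` is the length `ν'_{c+1}` of the `(c+1)`-st column of the partition `f`. -/
noncomputable def conj (f : ℕ → ℕ) (c : ℕ) : ℕ := Nat.card {r : ℕ | c + 1 ≤ f r}

/-- `odd(ν')`: the number of odd-length columns of `ν`. -/
noncomputable def oddConj (f : ℕ → ℕ) : ℕ := Nat.card {c : ℕ | Odd (conj f c)}

/-- The q-Pochhammer symbol `(p;p)_m = ∏_{j=1}^m (1 - p^j)`. -/
def qPoch (p : ℂ) (m : ℕ) : ℂ := ∏ j ∈ Finset.range m, (1 - p ^ (j + 1))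

/-- The Gaussian binomial coefficient `binom_p(k,j) = (p;p)_k / ((p;p)_j (p;p)_{k-j})`. -/
noncomputable def gbinom (p : ℂ) (k j : ℕ) : ℂ := qPoch p k / (qPoch p j * qPoch p (k - j))


namespace Gk

lemma nat_eq_of_lt_iff {m n : ℕ} (h : ∀ r, r < m ↔ r < n) : m = n := by
  rcases lt_trichotomy m n with h' | h' | h'
  · exact absurd ((h m).mpr h') (lt_irrefl m)
  · exact h'
  · exact absurd ((h n).mp h') (lt_irrefl n)

lemma nat_le_of_lt_imp {m n : ℕ} (h : ∀ r, r < m → r < n) : m ≤ n := by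
  by_contra hc
  push_neg at hc
  exact absurd (h n hc) (lt_irrefl n)

variable {f : ℕ → ℕ}

lemma conj_spec (hf : ∀ i j : ℕ, i ≤ j → f j ≤ f i) (hf0 : ∃ N, f N = 0) (c r : ℕ) :
    r < conj f c ↔ c + 1 ≤ f r := by
  obtain ⟨N, hN⟩ := hf0
  have hne : {r : ℕ | f r ≤ c}.Nonempty := ⟨N, by simp [hN]⟩
  set m := sInf {r : ℕ | f r ≤ c} with hm
  have hmem : f m ≤ c := Nat.sInf_mem hne
  have hset : {r : ℕ | c + 1 ≤ f r} = Set.Iio m := by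
    ext x
    simp only [Set.mem_setOf_eq, Set.mem_Iio]
    constructor
    · intro h
      by_contra hx
      push_neg at hx
      have := hf m x hx
      omega
    · intro h
      by_contra hx
      push_neg at hx
      have hx' : x ∈ {r : ℕ | f r ≤ c} := by simpa using Nat.lt_succ_iff.mp hx
      have := Nat.sInf_le hx'
      omega
  have hcard : conj f c = m := by
    simp only [conj]
    rw [hset, ← Finset.coe_range, Nat.card_coe_set_eq, Set.ncard_coe_finset, Finset.card_range]
  rw [hcard]
  have := Set.ext_iff.mp hset r
  simpa using this.symm

lemma conj_anti (hf : ∀ i j : ℕ, i ≤ j → f j ≤ f i) (hf0 : ∃ N, f N = 0) :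
    ∀ c c' : ℕ, c ≤ c' → conj f c' ≤ conj f c := by
  intro c c' h
  apply nat_le_of_lt_imp
  intro r hr
  have := (conj_spec hf hf0 c' r).mp hr
  exact (conj_spec hf hf0 c r).mpr (by omega)

lemma conj_zero_of_le (hf : ∀ i j : ℕ, i ≤ j → f j ≤ f i) (hf0 : ∃ N, f N = 0)
    {c : ℕ} (hc : f 0 ≤ c) : conj f c = 0 := by
  by_contra h
  have h0 : 0 < conj f c := Nat.pos_of_ne_zero h
  have := (conj_spec hf hf0 c 0).mp h0
  omega

lemma conj_prop (hf : ∀ i j : ℕ, i ≤ j → f j ≤ f i) (hf0 : ∃ N, f N = 0) :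
    (∀ i j : ℕ, i ≤ j → conj f j ≤ conj f i) ∧ ∃ N, conj f N = 0 :=
  ⟨fun i j h => conj_anti hf hf0 i j h, ⟨f 0, conj_zero_of_le hf hf0 le_rfl⟩⟩

lemma conj_conj (hf : ∀ i j : ℕ, i ≤ j → f j ≤ f i) (hf0 : ∃ N, f N = 0) :
    conj (conj f) = f := by
  funext r
  apply nat_eq_of_lt_iff
  intro x
  have hc := conj_prop hf hf0
  rw [conj_spec hc.1 hc.2 r x, Nat.add_one_le_iff, conj_spec hf hf0 x r, Nat.add_one_le_iff]

lemma psize_eq (hf : ∀ i j : ℕ, i ≤ j → f j ≤ f i) {N : ℕ} (hN : f N = 0) :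
    psize f = ∑ c ∈ Finset.range (f 0), conj f c := by
  have hsupp : Function.support f ⊆ ↑(Finset.range N) := by
    intro r hr
    simp only [Finset.coe_range, Set.mem_Iio]
    by_contra h
    push_neg at h
    exact hr (Nat.le_antisymm (hN ▸ hf N r h) (Nat.zero_le _))
  rw [psize, finsum_eq_finset_sum_of_support_subset f hsupp]
  calc ∑ r ∈ Finset.range N, f r
      = ∑ r ∈ Finset.range N, ∑ c ∈ Finset.range (f 0), (if c < f r then 1 else 0) := by
        refine Finset.sum_congr rfl fun r _ => ?_
        rw [← Finset.card_filter]
        have h1 : Finset.filter (fun c => c < f r) (Finset.range (f 0)) = Finset.range (f r) := by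
          ext c
          simp only [Finset.mem_filter, Finset.mem_range]
          have := hf 0 r (Nat.zero_le r)
          omega
        rw [h1, Finset.card_range]
    _ = ∑ c ∈ Finset.range (f 0), ∑ r ∈ Finset.range N, (if c < f r then 1 else 0) :=
        Finset.sum_comm
    _ = ∑ c ∈ Finset.range (f 0), conj f c := by
        refine Finset.sum_congr rfl fun c _ => ?_
        rw [← Finset.card_filter]
        have h1 : Finset.filter (fun r => c < f r) (Finset.range N) =
            Finset.range (conj f c) := by
          ext r
          simp only [Finset.mem_filter, Finset.mem_range]
          constructor
          · rintro ⟨_, h2⟩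
            exact (conj_spec hf ⟨N, hN⟩ c r).mpr h2
          · intro h
            have h2 := (conj_spec hf ⟨N, hN⟩ c r).mp h
            refine ⟨?_, by omega⟩
            by_contra hr
            push_neg at hr
            have := hf N r hr
            omega
        rw [h1, Finset.card_range]

lemma oddConj_eq (hf : ∀ i j : ℕ, i ≤ j → f j ≤ f i) (hf0 : ∃ N, f N = 0) :
    oddConj f = ((Finset.range (f 0)).filter fun c => Odd (conj f c)).card := by
  rw [oddConj]
  have hset : {c : ℕ | Odd (conj f c)} =
      ↑((Finset.range (f 0)).filter fun c => Odd (conj f c)) := by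
    ext c
    simp only [Set.mem_setOf_eq, Finset.coe_filter, Finset.mem_range, Set.mem_setOf_eq]
    constructor
    · intro h
      refine ⟨?_, h⟩
      by_contra hc
      push_neg at hc
      rw [conj_zero_of_le hf hf0 hc] at h
      simpa using h
    · exact fun h => h.2
  rw [hset, Nat.card_coe_set_eq, Set.ncard_coe_finset]


def cntOdd (k : ℕ) (g : ℕ → ℕ) : ℕ := ((Finset.range k).filter fun c => Odd (g c)).card
def cntEven (k : ℕ) (g : ℕ → ℕ) : ℕ := ((Finset.range k).filter fun c => Even (g c)).card

def wt (q a b : ℂ) (k : ℕ) (g : ℕ → ℕ) : ℂ :=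
  a ^ cntOdd k g * b ^ cntEven k g * q ^ (∑ c ∈ Finset.range k, g c)

def Dk (k : ℕ) : Type := {g : YD // (∀ i, i < k → 1 ≤ g.1 i) ∧ ∀ i, k ≤ i → g.1 i = 0}

noncomputable def T (q a b : ℂ) (k : ℕ) : ℂ := ∑' g : Dk k, wt q a b k g.1.1

noncomputable def conjEquiv (k : ℕ) : {ν : YD // ν.1 0 = k} ≃ Dk k where
  toFun ν := ⟨⟨conj ν.1.1, (conj_prop ν.1.2.1 ν.1.2.2).1, ⟨k, conj_zero_of_le ν.1.2.1 ν.1.2.2 ν.2.le⟩⟩,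
    ⟨fun i hi => (conj_spec ν.1.2.1 ν.1.2.2 i 0).mpr (by have h2 := ν.2; omega),
     fun i hi => conj_zero_of_le ν.1.2.1 ν.1.2.2 (by have h2 := ν.2; omega)⟩⟩
  invFun g := ⟨⟨conj g.1.1, (conj_prop g.1.2.1 g.1.2.2).1,
      ⟨g.1.1 0, conj_zero_of_le g.1.2.1 g.1.2.2 le_rfl⟩⟩, by
    apply nat_eq_of_lt_iff
    intro r
    rw [conj_spec g.1.2.1 g.1.2.2 0 r]
    constructor
    · intro h
      by_contra hr
      push_neg at hr
      rw [g.2.2 r hr] at h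
      omega
    · exact fun h => g.2.1 r h⟩
  left_inv ν := Subtype.ext (Subtype.ext (conj_conj ν.1.2.1 ν.1.2.2))
  right_inv g := Subtype.ext (Subtype.ext (conj_conj g.1.2.1 g.1.2.2))

lemma main_reduce (q z : ℂ) (k : ℕ) :
    (∑' ν : {ν : YD // ν.val 0 = k}, z ^ (2 * oddConj ν.val.val) * q ^ psize ν.val.val)
      = T q (z ^ 2) 1 k := by
  rw [T, ← Equiv.tsum_eq (conjEquiv k).symm
    (fun ν : {ν : YD // ν.val 0 = k} => z ^ (2 * oddConj ν.val.val) * q ^ psize ν.val.val)]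
  apply tsum_congr
  intro g
  have hg1 : ((conjEquiv k).symm g).1.1 = conj g.1.1 := rfl
  have hg0 : conj g.1.1 0 = k := ((conjEquiv k).symm g).2
  have hprop := conj_prop g.1.2.1 g.1.2.2
  have hcc : conj (conj g.1.1) = g.1.1 := conj_conj g.1.2.1 g.1.2.2
  rw [hg1]
  rw [oddConj_eq hprop.1 hprop.2, psize_eq hprop.1 (hprop.2.choose_spec), hg0, hcc]
  rw [wt, pow_mul, one_pow, mul_one]
  rfl

lemma summable_pow_pi {r : ℝ} (hr0 : 0 ≤ r) (hr1 : r < 1) (k : ℕ) :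
    Summable (fun n : Fin k → ℕ => ∏ i, r ^ (n i)) := by
  induction k with
  | zero =>
      haveI : Finite (Fin 0 → ℕ) := by
        haveI : Subsingleton (Fin 0 → ℕ) := ⟨fun a b => funext fun i => absurd i.2 (by omega)⟩
        exact Finite.of_subsingleton
      exact Summable.of_finite
  | succ k ih =>
      have hgeo : Summable (fun n : ℕ => r ^ n) := summable_geometric_of_lt_one hr0 hr1
      have hmul : Summable (fun x : ℕ × (Fin k → ℕ) => r ^ x.1 * ∏ i, r ^ (x.2 i)) :=
        Summable.mul_of_nonneg (f := fun n : ℕ => r ^ n)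
          (g := fun m : Fin k → ℕ => ∏ i, r ^ (m i)) hgeo ih
          (fun n => pow_nonneg hr0 n)
          (fun m => Finset.prod_nonneg fun i _ => pow_nonneg hr0 _)
      apply ((Fin.consEquiv (fun _ : Fin (k+1) => ℕ)).summable_iff
        (f := fun n : Fin (k+1) → ℕ => ∏ i, r ^ (n i))).mp
      have heq : (fun n : Fin (k+1) → ℕ => ∏ i, r ^ (n i)) ∘ (Fin.consEquiv (fun _ : Fin (k+1) => ℕ))
          = fun x : ℕ × (Fin k → ℕ) => r ^ x.1 * ∏ i, r ^ (x.2 i) := by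
        funext x
        simp [Fin.consEquiv, Fin.prod_univ_succ]
      rw [heq]
      exact hmul

lemma summable_wt (q a b : ℂ) (hq : ‖q‖ < 1) (k : ℕ) :
    Summable (fun g : Dk k => wt q a b k g.1.1) := by
  set C : ℝ := max 1 ‖a‖ * max 1 ‖b‖ with hC
  have hC1 : 1 ≤ C := one_le_mul_of_one_le_of_one_le (le_max_left _ _) (le_max_left _ _)
  set ι : Dk k → (Fin k → ℕ) := fun g i => g.1.1 i with hι
  have hinj : Function.Injective ι := by
    intro g g' h
    apply Subtype.ext
    apply Subtype.ext
    funext i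
    by_cases hi : i < k
    · exact congrFun h ⟨i, hi⟩
    · push_neg at hi
      rw [g.2.2 i hi, g'.2.2 i hi]
  have hbig : Summable (fun n : Fin k → ℕ => C ^ k * ∏ i, ‖q‖ ^ (n i)) :=
    (summable_pow_pi (norm_nonneg q) hq k).mul_left _
  have hcomp : Summable ((fun n : Fin k → ℕ => C ^ k * ∏ i, ‖q‖ ^ (n i)) ∘ ι) :=
    hbig.comp_injective hinj
  apply Summable.of_norm
  apply Summable.of_nonneg_of_le (fun g => norm_nonneg _) _ hcomp
  intro g
  have hsum : ∑ c ∈ Finset.range k, g.1.1 c = ∑ i : Fin k, ι g i := by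
    rw [Fin.sum_univ_eq_sum_range]
  have hqpow : ‖q‖ ^ (∑ c ∈ Finset.range k, g.1.1 c) = ∏ i, ‖q‖ ^ (ι g i) := by
    rw [hsum, ← Finset.prod_pow_eq_pow_sum]
  have hco : cntOdd k g.1.1 ≤ k := le_trans (Finset.card_filter_le _ _) (by simp)
  have hce : cntEven k g.1.1 ≤ k := le_trans (Finset.card_filter_le _ _) (by simp)
  calc ‖wt q a b k g.1.1‖
      = ‖a‖ ^ cntOdd k g.1.1 * ‖b‖ ^ cntEven k g.1.1
          * ‖q‖ ^ (∑ c ∈ Finset.range k, g.1.1 c) := by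
        rw [wt]; simp [norm_mul, norm_pow]
    _ ≤ C ^ k * ‖q‖ ^ (∑ c ∈ Finset.range k, g.1.1 c) := by
        apply mul_le_mul_of_nonneg_right _ (pow_nonneg (norm_nonneg q) _)
        calc ‖a‖ ^ cntOdd k g.1.1 * ‖b‖ ^ cntEven k g.1.1
            ≤ (max 1 ‖a‖) ^ k * (max 1 ‖b‖) ^ k := by
              apply mul_le_mul _ _ (pow_nonneg (norm_nonneg b) _)
                (pow_nonneg (le_trans zero_le_one (le_max_left _ _)) _)
              · calc ‖a‖ ^ cntOdd k g.1.1 ≤ (max 1 ‖a‖) ^ cntOdd k g.1.1 :=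
                    pow_le_pow_left₀ (norm_nonneg a) (le_max_right _ _) _
                  _ ≤ (max 1 ‖a‖) ^ k := pow_le_pow_right₀ (le_max_left _ _) hco
              · calc ‖b‖ ^ cntEven k g.1.1 ≤ (max 1 ‖b‖) ^ cntEven k g.1.1 :=
                    pow_le_pow_left₀ (norm_nonneg b) (le_max_right _ _) _
                  _ ≤ (max 1 ‖b‖) ^ k := pow_le_pow_right₀ (le_max_left _ _) hce
          _ = C ^ k := by rw [hC, mul_pow]
    _ = C ^ k * ∏ i, ‖q‖ ^ (ι g i) := by rw [hqpow]

noncomputable def down (g : ℕ → ℕ) : ℕ → ℕ := fun c => if c < conj g 1 then g c - 1 else 0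
def up (k : ℕ) (m : ℕ → ℕ) : ℕ → ℕ := fun c => if c < k then m c + 1 else 0

section step

variable {k : ℕ}

lemma jg_spec (g : Dk k) (r : ℕ) : r < conj g.1.1 1 ↔ 2 ≤ g.1.1 r :=
  conj_spec g.1.2.1 g.1.2.2 1 r

lemma jg_le (g : Dk k) : conj g.1.1 1 ≤ k := by
  apply nat_le_of_lt_imp
  intro r hr
  have h2 := (jg_spec g r).mp hr
  by_contra hk
  push_neg at hk
  have := g.2.2 r hk
  omega

lemma dk_heq {X Y : ℕ} (h : X = Y) {u : Dk X} {v : Dk Y} (h2 : u.1.1 = v.1.1) : HEq u v := by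
  subst h
  exact heq_of_eq (Subtype.ext (Subtype.ext h2))

noncomputable def stepEquiv (k : ℕ) : Dk k ≃ (Σ j : Fin (k+1), Dk j.1) where
  toFun g := ⟨⟨conj g.1.1 1, Nat.lt_succ_of_le (jg_le g)⟩,
    ⟨⟨down g.1.1, by
        intro i j hij
        have hmono := g.1.2.1 i j hij
        simp only [down]
        split_ifs <;> omega,
      ⟨conj g.1.1 1, by simp [down]⟩⟩,
      fun i hi => by
        have hi' : i < conj g.1.1 1 := hi
        have h2 := (jg_spec g i).mp hi'
        simp only [down, if_pos hi']
        omega,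
      fun i hi => by
        have hi' : conj g.1.1 1 ≤ i := hi
        simp only [down, if_neg (by omega : ¬ i < conj g.1.1 1)]⟩⟩
  invFun x := ⟨⟨up k x.2.1.1, by
      intro i j hij
      have hmono := x.2.1.2.1 i j hij
      simp only [up]
      split_ifs <;> omega,
    ⟨k, by simp [up]⟩⟩,
    fun i hi => by simp only [up, if_pos hi]; omega,
    fun i hi => by simp only [up, if_neg (by omega : ¬ i < k)]⟩
  left_inv g := by
    apply Subtype.ext
    apply Subtype.ext
    funext c
    simp only [up, down]
    by_cases hc : c < conj g.1.1 1
    · have h2 := (jg_spec g c).mp hc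
      have hck : c < conj g.1.1 1 ∧ c < k := ⟨hc, lt_of_lt_of_le hc (jg_le g)⟩
      rw [if_pos hck.2, if_pos hc]
      omega
    · by_cases hck : c < k
      · have h1 := g.2.1 c hck
        have h2 : ¬ 2 ≤ g.1.1 c := fun h => hc ((jg_spec g c).mpr h)
        rw [if_pos hck, if_neg hc]
        omega
      · rw [if_neg hck]
        push_neg at hck
        exact (g.2.2 c hck).symm
  right_inv x := by
    obtain ⟨⟨j, hj⟩, m⟩ := x
    have hjk : j ≤ k := Nat.lt_succ_iff.mp hj
    have hanti : ∀ i i' : ℕ, i ≤ i' → up k m.1.1 i' ≤ up k m.1.1 i := by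
      intro i i' hii
      have hmono := m.1.2.1 i i' hii
      simp only [up]
      split_ifs <;> omega
    have hev0 : ∃ N, up k m.1.1 N = 0 := ⟨k, by simp [up]⟩
    have hjeq : conj (up k m.1.1) 1 = j := by
      apply nat_eq_of_lt_iff
      intro r
      rw [conj_spec hanti hev0 1 r]
      simp only [up]
      constructor
      · intro h
        by_cases hrk : r < k
        · rw [if_pos hrk] at h
          by_contra hrj
          push_neg at hrj
          rw [m.2.2 r hrj] at h
          omega
        · rw [if_neg hrk] at h
          omega
      · intro h
        have hrk : r < k := lt_of_lt_of_le h hjk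
        have := m.2.1 r h
        rw [if_pos hrk]
        omega
    refine Sigma.ext (Fin.ext hjeq) (dk_heq hjeq ?_)
    funext c
    simp only [down, up, hjeq]
    by_cases hc : c < j
    · rw [if_pos hc, if_pos (lt_of_lt_of_le hc hjk)]
      omega
    · rw [if_neg hc]
      push_neg at hc
      exact (m.2.2 c hc).symm

lemma weight_eq (q a b : ℂ) (g : Dk k) :
    wt q a b k g.1.1
      = q ^ k * (a ^ (k - conj g.1.1 1) * wt q b a (conj g.1.1 1) (down g.1.1)) := by
  set j := conj g.1.1 1 with hj
  have hjk : j ≤ k := jg_le g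
  have hval1 : ∀ c, c < j → g.1.1 c = down g.1.1 c + 1 := by
    intro c hc
    have h2 := (jg_spec g c).mp hc
    simp only [down, if_pos (show c < conj g.1.1 1 from hc)]
    omega
  have hval2 : ∀ c, j ≤ c → c < k → g.1.1 c = 1 := by
    intro c hc hck
    have h1 := g.2.1 c hck
    have h2 : ¬ 2 ≤ g.1.1 c := fun h => absurd ((jg_spec g c).mpr h) (by omega)
    omega
  have hsplit : ∀ u : ℕ → ℕ, ∑ c ∈ Finset.range k, u c
      = ∑ c ∈ Finset.range j, u c + ∑ c ∈ Finset.Ico j k, u c := by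
    intro u
    rw [Finset.range_eq_Ico,
      ← Finset.sum_Ico_consecutive _ (Nat.zero_le j) hjk, ← Finset.range_eq_Ico]
  -- sum
  have hS : ∑ c ∈ Finset.range k, g.1.1 c
      = k + ∑ c ∈ Finset.range j, down g.1.1 c := by
    rw [hsplit]
    have h1 : ∑ c ∈ Finset.range j, g.1.1 c
        = ∑ c ∈ Finset.range j, (down g.1.1 c + 1) :=
      Finset.sum_congr rfl fun c hc => hval1 c (Finset.mem_range.mp hc)
    have h2 : ∑ c ∈ Finset.Ico j k, g.1.1 c = ∑ c ∈ Finset.Ico j k, 1 :=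
      Finset.sum_congr rfl fun c hc => by
        have := Finset.mem_Ico.mp hc
        exact hval2 c this.1 this.2
    rw [h1, h2, Finset.sum_add_distrib, Finset.sum_const, Finset.sum_const]
    simp only [Finset.card_range, Nat.card_Ico, smul_eq_mul, mul_one]
    omega
  -- counts
  have hCO : cntOdd k g.1.1 = (k - j) + cntEven j (down g.1.1) := by
    rw [cntOdd, cntEven, Finset.card_filter, Finset.card_filter, hsplit]
    have h1 : ∑ c ∈ Finset.range j, (if Odd (g.1.1 c) then 1 else 0)
        = ∑ c ∈ Finset.range j, (if Even (down g.1.1 c) then 1 else 0) := by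
      refine Finset.sum_congr rfl fun c hc => ?_
      rw [hval1 c (Finset.mem_range.mp hc)]
      simp only [Nat.odd_add_one, Nat.not_odd_iff_even]
    have h2 : ∑ c ∈ Finset.Ico j k, (if Odd (g.1.1 c) then 1 else 0)
        = ∑ c ∈ Finset.Ico j k, 1 := by
      refine Finset.sum_congr rfl fun c hc => ?_
      have hm := Finset.mem_Ico.mp hc
      rw [hval2 c hm.1 hm.2, if_pos odd_one]
    rw [h1, h2, Finset.sum_const, Nat.card_Ico, smul_eq_mul, mul_one]
    omega
  have hCE : cntEven k g.1.1 = cntOdd j (down g.1.1) := by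
    rw [cntEven, cntOdd, Finset.card_filter, Finset.card_filter, hsplit]
    have h1 : ∑ c ∈ Finset.range j, (if Even (g.1.1 c) then 1 else 0)
        = ∑ c ∈ Finset.range j, (if Odd (down g.1.1 c) then 1 else 0) := by
      refine Finset.sum_congr rfl fun c hc => ?_
      rw [hval1 c (Finset.mem_range.mp hc)]
      simp only [Nat.even_add_one, Nat.not_even_iff_odd]
    have h2 : ∑ c ∈ Finset.Ico j k, (if Even (g.1.1 c) then 1 else 0)
        = 0 := by
      apply Finset.sum_eq_zero
      intro c hc
      have hm := Finset.mem_Ico.mp hc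
      rw [hval2 c hm.1 hm.2, if_neg (by simp)]
    rw [h1, h2]
    omega
  rw [wt, wt, hS, hCO, hCE, pow_add, pow_add]
  ring

end step

lemma T_zero (q a b : ℂ) : T q a b 0 = 1 := by
  have huniq : ∀ g : Dk 0, g.1.1 = fun _ => 0 := by
    intro g
    funext i
    exact g.2.2 i (Nat.zero_le i)
  haveI : Unique (Dk 0) :=
    { default := ⟨⟨fun _ => 0, fun i j _ => le_rfl, ⟨0, rfl⟩⟩,
        ⟨fun i hi => absurd hi (by omega), fun i _ => rfl⟩⟩,
      uniq := fun g => Subtype.ext (Subtype.ext (huniq g)) }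
  rw [T, tsum_eq_single default (fun b hb => absurd (Subsingleton.elim b default) hb)]
  simp [wt, cntOdd, cntEven]

lemma T_rec (q a b : ℂ) (hq : ‖q‖ < 1) (k : ℕ) :
    T q a b k = q ^ k * ∑ j ∈ Finset.range (k + 1), a ^ (k - j) * T q b a j := by
  have hsumwt := summable_wt q a b hq k
  have hwt : ∀ g : Dk k,
      wt q a b k g.1.1
        = (fun x : Σ j : Fin (k+1), Dk j.1 =>
            q ^ k * (a ^ (k - x.1.1) * wt q b a x.1.1 x.2.1.1)) (stepEquiv k g) :=
    fun g => weight_eq q a b g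
  set h : (Σ j : Fin (k+1), Dk j.1) → ℂ :=
    fun x => q ^ k * (a ^ (k - x.1.1) * wt q b a x.1.1 x.2.1.1) with hh
  have hsumh : Summable h := by
    rw [← Equiv.summable_iff (stepEquiv k)]
    have : (h ∘ stepEquiv k) = fun g : Dk k => wt q a b k g.1.1 := by
      funext g
      exact (hwt g).symm
    rw [this]
    exact hsumwt
  have h1 : T q a b k = ∑' x, h x := by
    rw [T, tsum_congr hwt]
    exact Equiv.tsum_eq (stepEquiv k) h
  rw [h1, hsumh.tsum_sigma]
  have h2 : ∀ j : Fin (k+1), (∑' m : Dk j.1, h ⟨j, m⟩)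
      = q ^ k * (a ^ (k - j.1) * T q b a j.1) := by
    intro j
    rw [hh]
    simp only
    rw [tsum_mul_left, tsum_mul_left, T]
  rw [tsum_fintype, Finset.sum_congr rfl (fun j _ => h2 j)]
  rw [Fin.sum_univ_eq_sum_range (fun n => q ^ k * (a ^ (k - n) * T q b a n)) (k+1)]
  rw [Finset.mul_sum]

lemma qPoch_ne_zero {p : ℂ} (hp : ‖p‖ < 1) (m : ℕ) : qPoch p m ≠ 0 := by
  rw [qPoch]
  apply Finset.prod_ne_zero_iff.mpr
  intro j _
  intro h
  have h1 : p ^ (j + 1) = 1 := by linear_combination -h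
  have h2 : ‖p ^ (j + 1)‖ < 1 := by
    rw [norm_pow]
    calc ‖p‖ ^ (j + 1) ≤ ‖p‖ ^ 1 :=
          pow_le_pow_of_le_one (norm_nonneg p) hp.le (by omega)
      _ < 1 := by simpa using hp
  rw [h1] at h2
  simp at h2

lemma sq_norm_lt {q : ℂ} (hq : ‖q‖ < 1) : ‖q ^ 2‖ < 1 := by
  rw [norm_pow]
  calc ‖q‖ ^ 2 ≤ ‖q‖ ^ 1 := pow_le_pow_of_le_one (norm_nonneg q) hq.le (by omega)
    _ < 1 := by simpa using hq

lemma inv_poch_sum {p : ℂ} (hp : ‖p‖ < 1) (m : ℕ) :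
    ∑ s ∈ Finset.range (m + 1), p ^ s / qPoch p s = 1 / qPoch p m := by
  induction m with
  | zero => simp [qPoch]
  | succ m ih =>
      rw [Finset.sum_range_succ, ih]
      have hm := qPoch_ne_zero hp m
      have hm1 := qPoch_ne_zero hp (m + 1)
      have hstep : qPoch p (m + 1) = qPoch p m * (1 - p ^ (m + 1)) :=
        Finset.prod_range_succ _ _
      have hfac : (1 - p ^ (m + 1)) ≠ 0 := by
        intro h
        rw [hstep, h, mul_zero] at hm1
        exact hm1 rfl
      rw [hstep]
      field_simp
      try ring

noncomputable def Fk (q a b : ℂ) (k : ℕ) : ℂ :=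
  (∑ j ∈ Finset.range (k + 1), (q * a) ^ j * (q ^ 2 * b) ^ (k - j) * gbinom (q ^ 2) k j)
    / qPoch (q ^ 2) k

lemma Fk_zero (q a b : ℂ) : Fk q a b 0 = 1 := by
  simp [Fk, gbinom, qPoch]

lemma F_to_M {q : ℂ} (hq : ‖q‖ < 1) (a b : ℂ) (k : ℕ) :
    Fk q a b k = ∑ j ∈ Finset.range (k + 1),
      a ^ (k - j) * b ^ j * (q ^ (k + j) / (qPoch (q ^ 2) j * qPoch (q ^ 2) (k - j))) := by
  have hp := sq_norm_lt hq
  have hP : ∀ m, qPoch (q ^ 2) m ≠ 0 := fun m => qPoch_ne_zero hp m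
  rw [Fk, Finset.sum_div]
  rw [← Finset.sum_range_reflect
    (fun j => (q * a) ^ j * (q ^ 2 * b) ^ (k - j) * gbinom (q ^ 2) k j / qPoch (q ^ 2) k)
    (k + 1)]
  apply Finset.sum_congr rfl
  intro j hj
  have hjk : j ≤ k := Nat.lt_succ_iff.mp (Finset.mem_range.mp hj)
  have hidx : k + 1 - 1 - j = k - j := by omega
  rw [hidx]
  simp only [gbinom]
  rw [Nat.sub_sub_self hjk]
  rw [mul_pow, mul_pow]
  have hqq : q ^ (k - j) * (q ^ 2) ^ j = q ^ (k + j) := by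
    rw [← pow_mul, ← pow_add]
    congr 1
    omega
  rw [← hqq]
  field_simp [hP k, hP j, hP (k - j)]
  try ring

lemma Frec_to_M {q : ℂ} (hq : ‖q‖ < 1) (a b : ℂ) (k : ℕ) :
    q ^ k * ∑ i ∈ Finset.range (k + 1), a ^ (k - i) * Fk q b a i
      = ∑ j ∈ Finset.range (k + 1),
          a ^ (k - j) * b ^ j * (q ^ (k + j) / (qPoch (q ^ 2) j * qPoch (q ^ 2) (k - j))) := by
  have hp := sq_norm_lt hq
  have hP : ∀ m, qPoch (q ^ 2) m ≠ 0 := fun m => qPoch_ne_zero hp m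
  set t : ℕ → ℕ → ℂ := fun i j => a ^ (k - j) * b ^ j * q ^ (k + j)
    * ((q ^ 2) ^ (i - j) / (qPoch (q ^ 2) j * qPoch (q ^ 2) (i - j))) with ht
  have step1 : q ^ k * ∑ i ∈ Finset.range (k + 1), a ^ (k - i) * Fk q b a i
      = ∑ i ∈ Finset.range (k + 1), ∑ j ∈ Finset.range (i + 1), t i j := by
    rw [Finset.mul_sum]
    apply Finset.sum_congr rfl
    intro i hi
    have hik : i ≤ k := Nat.lt_succ_iff.mp (Finset.mem_range.mp hi)
    rw [Fk, Finset.sum_div, Finset.mul_sum, Finset.mul_sum]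
    apply Finset.sum_congr rfl
    intro j hj
    have hji : j ≤ i := Nat.lt_succ_iff.mp (Finset.mem_range.mp hj)
    rw [ht]
    simp only [gbinom]
    rw [mul_pow, mul_pow]
    have ha : a ^ (k - i) * a ^ (i - j) = a ^ (k - j) := by
      rw [← pow_add]
      congr 1
      omega
    have hq2 : q ^ k * q ^ j = q ^ (k + j) := by rw [← pow_add]
    field_simp [hP i, hP j, hP (i - j)]
    rw [← ha, ← hq2]
    try ring
  have step2 : ∑ i ∈ Finset.range (k + 1), ∑ j ∈ Finset.range (i + 1), t i j
      = ∑ j ∈ Finset.range (k + 1), ∑ i ∈ Finset.range (k + 1),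
          (if j ≤ i then t i j else 0) := by
    rw [← Finset.sum_comm]
    apply Finset.sum_congr rfl
    intro i hi
    have hik : i + 1 ≤ k + 1 := by
      have := Finset.mem_range.mp hi
      omega
    rw [← Finset.sum_subset (Finset.range_subset_range.mpr hik)
      (fun j _ hj => if_neg (fun hji => hj (Finset.mem_range.mpr (by omega))))]
    apply Finset.sum_congr rfl
    intro j hj
    rw [if_pos (Nat.lt_succ_iff.mp (Finset.mem_range.mp hj))]
  have step3 : ∀ j, j ∈ Finset.range (k + 1) →
      ∑ i ∈ Finset.range (k + 1), (if j ≤ i then t i j else 0)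
        = a ^ (k - j) * b ^ j * (q ^ (k + j) / (qPoch (q ^ 2) j * qPoch (q ^ 2) (k - j))) := by
    intro j hj
    have hjk : j ≤ k := Nat.lt_succ_iff.mp (Finset.mem_range.mp hj)
    rw [← Finset.sum_filter]
    have hfil : Finset.filter (fun i => j ≤ i) (Finset.range (k + 1)) = Finset.Ico j (k + 1) := by
      ext i
      simp only [Finset.mem_filter, Finset.mem_range, Finset.mem_Ico]
      omega
    rw [hfil, Finset.sum_Ico_eq_sum_range]
    have hidx : k + 1 - j = (k - j) + 1 := by omega
    rw [hidx]
    have hterm : ∀ s, t (j + s) j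
        = (a ^ (k - j) * b ^ j * q ^ (k + j) * (1 / qPoch (q ^ 2) j))
            * ((q ^ 2) ^ s / qPoch (q ^ 2) s) := by
      intro s
      rw [ht]
      simp only [Nat.add_sub_cancel_left]
      ring
    rw [Finset.sum_congr rfl (fun s _ => hterm s), ← Finset.mul_sum,
      inv_poch_sum hp (k - j)]
    field_simp
  rw [step1, step2, Finset.sum_congr rfl step3]

lemma Fk_rec {q : ℂ} (hq : ‖q‖ < 1) (a b : ℂ) (k : ℕ) :
    Fk q a b k = q ^ k * ∑ j ∈ Finset.range (k + 1), a ^ (k - j) * Fk q b a j :=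
  (F_to_M hq a b k).trans (Frec_to_M hq a b k).symm

lemma T_eq_Fk {q : ℂ} (hq : ‖q‖ < 1) : ∀ k a b, T q a b k = Fk q a b k := by
  intro k
  induction k using Nat.strong_induction_on with
  | _ k ih =>
    intro a b
    rcases Nat.eq_zero_or_pos k with hk | hk
    · subst hk
      rw [T_zero, Fk_zero]
    · have key : ∀ a b : ℂ, T q a b k - Fk q a b k = q ^ k * (T q b a k - Fk q b a k) := by
        intro a b
        have h1 := T_rec q a b hq k
        have h2 := Fk_rec hq a b k
        rw [Finset.sum_range_succ] at h1 h2
        have h3 : ∑ j ∈ Finset.range k, a ^ (k - j) * T q b a j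
            = ∑ j ∈ Finset.range k, a ^ (k - j) * Fk q b a j :=
          Finset.sum_congr rfl fun j hj => by rw [ih j (Finset.mem_range.mp hj) b a]
        rw [h1, h2, h3, Nat.sub_self, pow_zero]
        ring
      have e1 := key a b
      have e2 := key b a
      have heq : T q a b k - Fk q a b k = q ^ (2 * k) * (T q a b k - Fk q a b k) := by
        calc T q a b k - Fk q a b k = q ^ k * (T q b a k - Fk q b a k) := e1
          _ = q ^ k * (q ^ k * (T q a b k - Fk q a b k)) := by rw [e2]
          _ = q ^ (2 * k) * (T q a b k - Fk q a b k) := by rw [two_mul, pow_add]; ring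
      have hne : (1 : ℂ) - q ^ (2 * k) ≠ 0 := by
        intro h
        have h1 : q ^ (2 * k) = 1 := by linear_combination -h
        have h2 : ‖q ^ (2 * k)‖ < 1 := by
          rw [norm_pow]
          exact pow_lt_one₀ (norm_nonneg q) hq (by omega)
        rw [h1] at h2
        simp at h2
      have hz : (T q a b k - Fk q a b k) * (1 - q ^ (2 * k)) = 0 := by
        linear_combination heq
      rcases mul_eq_zero.mp hz with h | h
      · exact sub_eq_zero.mp h
      · exact absurd h hne

end Gk

/-- Lemma (g_k formula): for every k ≥ 0,
∑_{ν : ν₁ = k} z^{2·odd(ν')} q^{|ν|} = [qz² + q²]_{q²}^k / (q²;q²)_k,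
where [A+B]_p^k = ∑_{j=0}^k A^j B^{k-j} binom_p(k,j). -/
theorem gk_formula (q z : ℂ) (hq : ‖q‖ < 1) (k : ℕ) :
    ∑' ν : {ν : YD // ν.val 0 = k},
        z ^ (2 * oddConj ν.val.val) * q ^ psize ν.val.val
      = (∑ j ∈ Finset.range (k + 1),
            (q * z ^ 2) ^ j * (q ^ 2) ^ (k - j) * gbinom (q ^ 2) k j)
          / qPoch (q ^ 2) k := by
  rw [Gk.main_reduce q z k, Gk.T_eq_Fk hq k (z ^ 2) 1]
  simp only [Gk.Fk, mul_one]
end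

section
/- For the skew RS map of arrays a ∈ ℤ^N weakly decreasing and b a sub-array of a (b_i = a_{j_i} with j₁ > ⋯ > j_M): if (a', b') = RS(a, b), then b' = (b₁+1, …, b_M+1), and a' agrees with a except on a set of M indices where the corresponding entries of a are increased by 1. -/
/-- The admissible ℤ-valued edge configuration on the rectangular lattice with
west boundary `a` and south boundary `b`: `faceZ a b j i = (E, N)` are the east and
north edge values of the face in (0-based) column `j`, row `i`, determined by the
local rules: if `W ≠ S` then `E = W, N = S`; if `W = S` then `E = N = S + 1`. -/
def faceZ (a b : ℕ → ℤ) : ℕ → ℕ → ℤ × ℤ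
  | 0, 0 =>
      if a 0 = b 0 then (b 0 + 1, b 0 + 1) else (a 0, b 0)
  | 0, i + 1 =>
      let W := a (i + 1)
      let S := (faceZ a b 0 i).2
      if W = S then (S + 1, S + 1) else (W, S)
  | j + 1, 0 =>
      let W := (faceZ a b j 0).1
      let S := b (j + 1)
      if W = S then (S + 1, S + 1) else (W, S)
  | j + 1, i + 1 =>
      let W := (faceZ a b j (i + 1)).1
      let S := (faceZ a b (j + 1) i).2
      if W = S then (S + 1, S + 1) else (W, S)
  termination_by j i => (j, i)

namespace SkewRSAux

def colStep (w : ℕ → ℤ) (s : ℤ) : ℕ → ℤ × ℤ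
  | 0 => if w 0 = s then (s + 1, s + 1) else (w 0, s)
  | i + 1 =>
      let S := (colStep w s i).2
      if w (i + 1) = S then (S + 1, S + 1) else (w (i + 1), S)

lemma faceZ_zero (a b : ℕ → ℤ) : ∀ i, faceZ a b 0 i = colStep a (b 0) i
  | 0 => by simp [faceZ, colStep]
  | i + 1 => by
      rw [faceZ, colStep]
      simp [faceZ_zero a b i]

lemma faceZ_succ (a b : ℕ → ℤ) (j : ℕ) :
    ∀ i, faceZ a b (j + 1) i = colStep (fun r => (faceZ a b j r).1) (b (j + 1)) i
  | 0 => by simp [faceZ, colStep]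
  | i + 1 => by
      rw [faceZ, colStep]
      simp [faceZ_succ a b j i]

lemma colStep_congr (w w' : ℕ → ℤ) (s : ℤ) :
    ∀ i, (∀ r, r ≤ i → w r = w' r) → colStep w s i = colStep w' s i
  | 0, h => by simp [colStep, h 0 le_rfl]
  | i + 1, h => by
      rw [colStep, colStep]
      simp [h (i + 1) le_rfl, colStep_congr w w' s i (fun r hr => h r (hr.trans (Nat.le_succ i)))]

end SkewRSAux

namespace SkewRSAux

lemma colStep_below (w : ℕ → ℤ) (s : ℤ) (f : ℕ) (hmin : ∀ q, q < f → w q ≠ s) :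
    ∀ i, i < f → colStep w s i = (w i, s)
  | 0, h => by simp [colStep, hmin 0 h]
  | i + 1, h => by
      rw [colStep]
      simp [colStep_below w s f hmin i (Nat.lt_of_succ_lt h), hmin (i + 1) h]

lemma colStep_at (w : ℕ → ℤ) (s : ℤ) (f : ℕ) (hf : w f = s)
    (hmin : ∀ q, q < f → w q ≠ s) : colStep w s f = (s + 1, s + 1) := by
  cases f with
  | zero => simp [colStep, hf]
  | succ f =>
      rw [colStep]
      simp [colStep_below w s (f + 1) hmin f (Nat.lt_succ_self f), hf]

lemma colStep_above (w : ℕ → ℤ) (s : ℤ) (f : ℕ) (hf : w f = s)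
    (hmin : ∀ q, q < f → w q ≠ s) :
    ∀ i, f < i → (∀ q, f < q → q ≤ i → w q ≠ s + 1) → colStep w s i = (w i, s + 1)
  | 0, h, _ => absurd h (Nat.not_lt_zero f)
  | i + 1, h, hup => by
      rw [colStep]
      have hS : (colStep w s i).2 = s + 1 := by
        rcases Nat.lt_or_ge f i with hfi | hfi
        · rw [colStep_above w s f hf hmin i hfi
            (fun q hq hq' => hup q hq (hq'.trans (Nat.le_succ i)))]
        · have : f = i := le_antisymm (Nat.lt_succ_iff.1 h) hfi
          rw [← this, colStep_at w s f hf hmin]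
      simp [hS, hup (i + 1) h le_rfl]

lemma col_spec (w : ℕ → ℤ) (s : ℤ) (f N : ℕ) (hfN : f < N) (hwf : w f = s)
    (hmin : ∀ q, q < f → w q ≠ s) (hup : ∀ q, f < q → q < N → w q ≤ w f) :
    (∀ i, i < N → (colStep w s i).1 = Function.update w f (s + 1) i) ∧
    (∀ i, f ≤ i → i < N → (colStep w s i).2 = s + 1) := by
  have hup' : ∀ q, f < q → q < N → w q ≠ s + 1 := by
    intro q hq hqN
    have := hup q hq hqN
    rw [hwf] at this
    omega
  constructor
  · intro i hiN
    rcases Nat.lt_trichotomy i f with h | h | h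
    · rw [colStep_below w s f hmin i h, Function.update_of_ne (Nat.ne_of_lt h)]
    · rw [h, colStep_at w s f hwf hmin, Function.update_self]
    · rw [colStep_above w s f hwf hmin i h
        (fun q hq hq' => hup' q hq (lt_of_le_of_lt hq' hiN)),
        Function.update_of_ne (Nat.ne_of_gt h)]
  · intro i hfi hiN
    rcases Nat.lt_or_ge f i with h | h
    · rw [colStep_above w s f hwf hmin i h
        (fun q hq hq' => hup' q hq (lt_of_le_of_lt hq' hiN))]
    · have hif : i = f := le_antisymm h hfi
      rw [hif, colStep_at w s f hwf hmin]

def stIdxAux (N : ℕ) (w : ℕ → ℤ) (x : ℤ) : ℕ :=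
  Nat.find (show ∃ q, N ≤ q ∨ w q = x from ⟨N, Or.inl le_rfl⟩)

def stArr (a v : ℕ → ℤ) (N : ℕ) : ℕ → ℕ → ℤ
  | 0 => a
  | j + 1 =>
      let w := stArr a v N j
      Function.update w (stIdxAux N w (v j)) (w (stIdxAux N w (v j)) + 1)

def stIdx (a v : ℕ → ℤ) (N : ℕ) (j : ℕ) : ℕ := stIdxAux N (stArr a v N j) (v j)

lemma stArr_succ (a v : ℕ → ℤ) (N j : ℕ) :
    stArr a v N (j + 1) = Function.update (stArr a v N j) (stIdx a v N j)
      (stArr a v N j (stIdx a v N j) + 1) := rfl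

lemma stIdxAux_spec (N : ℕ) (w : ℕ → ℤ) (x : ℤ) :
    N ≤ stIdxAux N w x ∨ w (stIdxAux N w x) = x :=
  Nat.find_spec (show ∃ q, N ≤ q ∨ w q = x from ⟨N, Or.inl le_rfl⟩)

lemma stIdxAux_le {N : ℕ} {w : ℕ → ℤ} {x : ℤ} {q : ℕ} (h : N ≤ q ∨ w q = x) :
    stIdxAux N w x ≤ q := Nat.find_le h

lemma stIdxAux_min {N : ℕ} {w : ℕ → ℤ} {x : ℤ} {q : ℕ} (h : q < stIdxAux N w x) :
    ¬(N ≤ q ∨ w q = x) := Nat.find_min _ h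

end SkewRSAux

namespace SkewRSAux

lemma key (N M : ℕ) (a : ℕ → ℤ) (jdx : ℕ → ℕ)
    (ha : ∀ i i', i ≤ i' → i' < N → a i' ≤ a i)
    (hj : ∀ i, i < M → jdx i < N)
    (hjanti : ∀ i i', i < i' → i' < M → jdx i' < jdx i) :
    ∀ j, j ≤ M →
      (∀ t, t < j → stIdx a (fun t => a (jdx t)) N t < N ∧
          a (stIdx a (fun t => a (jdx t)) N t) = a (jdx t)) ∧
      (∀ t t', t < t' → t' < j →
          stIdx a (fun t => a (jdx t)) N t ≠ stIdx a (fun t => a (jdx t)) N t') ∧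
      (∀ k, k < N → (∀ t, t < j → stIdx a (fun t => a (jdx t)) N t ≠ k) →
          stArr a (fun t => a (jdx t)) N j k = a k) ∧
      (∀ t, t < j → stArr a (fun t => a (jdx t)) N j (stIdx a (fun t => a (jdx t)) N t)
          = a (jdx t) + 1) ∧
      (∀ k k', k ≤ k' → k' < N →
          stArr a (fun t => a (jdx t)) N j k' ≤ stArr a (fun t => a (jdx t)) N j k) := by
  classical
  set b : ℕ → ℤ := fun t => a (jdx t) with hb
  intro j
  induction j with
  | zero =>
      intro _
      exact ⟨fun t ht => absurd ht (Nat.not_lt_zero t),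
        fun t t' _ ht' => absurd ht' (Nat.not_lt_zero t'),
        fun k _ _ => rfl,
        fun t ht => absurd ht (Nat.not_lt_zero t),
        fun k k' hkk' hk' => ha k k' hkk' hk'⟩
  | succ j ih =>
      intro hjM
      obtain ⟨P1, P2, P3, P4, P5⟩ := ih (Nat.le_of_succ_le hjM)
      have hjltM : j < M := Nat.lt_of_succ_le hjM
      set w : ℕ → ℤ := stArr a b N j with hw
      set v : ℤ := a (jdx j) with hv
      have hjN : jdx j < N := hj j hjltM
      -- counting: there is an unbumped position p < N with a p = v
      set Sv : Finset ℕ := (Finset.range N).filter (fun p => a p = v) with hSv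
      set Tj : Finset ℕ := (Finset.range j).filter (fun t => a (jdx t) = v) with hTj
      set T' : Finset ℕ := (Finset.range (j + 1)).filter (fun t => a (jdx t) = v) with hT'
      have hjdxinj : ∀ t t', t < M → t' < M → jdx t = jdx t' → t = t' := by
        intro t t' ht ht' heq
        rcases Nat.lt_trichotomy t t' with h | h | h
        · exact absurd heq (Nat.ne_of_gt (hjanti t t' h ht'))
        · exact h
        · exact absurd heq (Nat.ne_of_lt (hjanti t' t h ht))
      have hT'S : T'.card ≤ Sv.card := by
        apply Finset.card_le_card_of_injOn jdx
        · intro t ht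
          rw [hT', Finset.mem_coe, Finset.mem_filter, Finset.mem_range] at ht
          rw [hSv, Finset.mem_coe, Finset.mem_filter, Finset.mem_range]
          exact ⟨hj t (lt_of_lt_of_le ht.1 hjM), ht.2⟩
        · intro t ht t' ht' heq
          rw [hT', Finset.coe_filter, Set.mem_setOf_eq, Finset.mem_range] at ht ht'
          exact hjdxinj t t' (lt_of_lt_of_le ht.1 hjM) (lt_of_lt_of_le ht'.1 hjM) heq
      have hTjT' : Tj.card < T'.card := by
        apply Finset.card_lt_card
        constructor
        · intro t ht
          rw [hTj, Finset.mem_filter, Finset.mem_range] at ht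
          rw [hT', Finset.mem_filter, Finset.mem_range]
          exact ⟨Nat.lt_succ_of_lt ht.1, ht.2⟩
        · intro hsub
          have hjmem : j ∈ T' := by
            rw [hT', Finset.mem_filter, Finset.mem_range]
            exact ⟨Nat.lt_succ_self j, rfl⟩
          have := hsub hjmem
          rw [hTj, Finset.mem_filter, Finset.mem_range] at this
          exact Nat.lt_irrefl j this.1
      have himgcard : (Tj.image (stIdx a b N)).card = Tj.card := by
        apply Finset.card_image_of_injOn
        intro t ht t' ht' heq
        rw [hTj, Finset.coe_filter, Set.mem_setOf_eq, Finset.mem_range] at ht ht'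
        rcases Nat.lt_trichotomy t t' with h | h | h
        · exact absurd heq (P2 t t' h ht'.1)
        · exact h
        · exact absurd heq.symm (P2 t' t h ht.1)
      have himgsub : Tj.image (stIdx a b N) ⊆ Sv := by
        intro p hp
        rw [Finset.mem_image] at hp
        obtain ⟨t, ht, rfl⟩ := hp
        rw [hTj, Finset.mem_filter, Finset.mem_range] at ht
        rw [hSv, Finset.mem_filter, Finset.mem_range]
        exact ⟨(P1 t ht.1).1, by rw [(P1 t ht.1).2, ht.2]⟩
      obtain ⟨p, hpS, hpI⟩ : ∃ p ∈ Sv, p ∉ Tj.image (stIdx a b N) := by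
        by_contra hcon
        push_neg at hcon
        have hsub : Sv ⊆ Tj.image (stIdx a b N) := fun p hp => hcon p hp
        have := Finset.card_le_card hsub
        omega
      rw [hSv, Finset.mem_filter, Finset.mem_range] at hpS
      obtain ⟨hpN, hpv⟩ := hpS
      have hpd : ∀ t, t < j → stIdx a b N t ≠ p := by
        intro t ht heq
        by_cases hvt : a (jdx t) = v
        · exact hpI (Finset.mem_image.2 ⟨t, by
            rw [hTj, Finset.mem_filter, Finset.mem_range]; exact ⟨ht, hvt⟩, heq⟩)
        · have h1 := (P1 t ht).2
          rw [heq] at h1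
          rw [← h1] at hvt
          exact hvt hpv
      have hwp : w p = v := by rw [P3 p hpN hpd, hpv]
      -- f := stIdx j
      have hfle : stIdx a b N j ≤ p := stIdxAux_le (Or.inr (by show w p = b j; rw [hwp, hb]))
      have hfN : stIdx a b N j < N := lt_of_le_of_lt hfle hpN
      set f : ℕ := stIdx a b N j with hf
      have hwf : w f = v := by
        have hspec : N ≤ f ∨ w f = b j := stIdxAux_spec N w (b j)
        rcases hspec with h | h
        · omega
        · exact h
      have hfmin : ∀ q, q < f → w q ≠ v := by
        intro q hq hqv
        have hmin : ¬(N ≤ q ∨ w q = b j) := stIdxAux_min hq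
        exact hmin (Or.inr hqv)
      have hfunb : ∀ t, t < j → stIdx a b N t ≠ f := by
        intro t ht heq
        have h1 := (P1 t ht).2
        have h4 := P4 t ht
        rw [heq] at h1 h4
        -- h1 : a f = a (jdx t), h4 : w f = a (jdx t) + 1, hwf : w f = v
        have h5 : a p ≤ a f := ha f p hfle hpN
        omega
      have haf : a f = v := by
        rw [← P3 f hfN hfunb]
        exact hwf
      refine ⟨?_, ?_, ?_, ?_, ?_⟩
      · intro t ht
        rcases Nat.lt_succ_iff_lt_or_eq.1 ht with h | h
        · exact P1 t h
        · subst h; exact ⟨hfN, haf⟩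
      · intro t t' htt' ht'
        rcases Nat.lt_succ_iff_lt_or_eq.1 ht' with h | h
        · exact P2 t t' htt' h
        · subst h; exact hfunb t htt'
      · intro k hk hne
        rw [stArr_succ, ← hw, ← hf, Function.update_of_ne (Ne.symm (hne j (Nat.lt_succ_self j)))]
        exact P3 k hk (fun t ht => hne t (Nat.lt_succ_of_lt ht))
      · intro t ht
        rcases Nat.lt_succ_iff_lt_or_eq.1 ht with h | h
        · rw [stArr_succ, ← hw, ← hf, Function.update_of_ne (hfunb t h)]
          exact P4 t h
        · subst h
          rw [stArr_succ, ← hw, ← hf, Function.update_self, hwf]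
      · intro k k' hkk' hk'N
        rw [stArr_succ, ← hw, ← hf]
        by_cases hk'f : k' = f
        · rw [hk'f, Function.update_self]
          by_cases hkf : k = f
          · rw [hkf, Function.update_self]
          · rw [Function.update_of_ne hkf]
            have h1 : w f ≤ w k := P5 k f (hk'f ▸ hkk') hfN
            have h2 : w k ≠ v := hfmin k (lt_of_le_of_ne (hk'f ▸ hkk') hkf)
            omega
        · rw [Function.update_of_ne hk'f]
          by_cases hkf : k = f
          · rw [hkf, Function.update_self]
            have h1 : w k' ≤ w f := P5 f k' (hkf ▸ hkk') hk'N
            omega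
          · rw [Function.update_of_ne hkf]
            exact P5 k k' hkk' hk'N

end SkewRSAux

namespace SkewRSAux

lemma face_eq (N M : ℕ) (a : ℕ → ℤ) (jdx : ℕ → ℕ)
    (ha : ∀ i i', i ≤ i' → i' < N → a i' ≤ a i)
    (hj : ∀ i, i < M → jdx i < N)
    (hjanti : ∀ i i', i < i' → i' < M → jdx i' < jdx i) :
    ∀ j, j < M →
      (∀ i, i < N → (faceZ a (fun t => a (jdx t)) j i).1
          = stArr a (fun t => a (jdx t)) N (j + 1) i) ∧
      (∀ i, stIdx a (fun t => a (jdx t)) N j ≤ i → i < N →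
          (faceZ a (fun t => a (jdx t)) j i).2 = a (jdx j) + 1) := by
  set b : ℕ → ℤ := fun t => a (jdx t) with hb
  have main : ∀ j, j < M →
      (∀ i, i < N → (colStep (stArr a b N j) (b j) i).1 = stArr a b N (j + 1) i) ∧
      (∀ i, stIdx a b N j ≤ i → i < N →
          (colStep (stArr a b N j) (b j) i).2 = b j + 1) := by
    intro j hjM
    obtain ⟨P1, -, -, -, -⟩ := key N M a jdx ha hj hjanti (j + 1) hjM
    obtain ⟨-, -, -, -, P5⟩ := key N M a jdx ha hj hjanti j (le_of_lt hjM)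
    set w := stArr a b N j with hw
    set f := stIdx a b N j with hf
    have hfN : f < N := (P1 j (Nat.lt_succ_self j)).1
    have hwf : w f = b j := by
      have hspec : N ≤ f ∨ w f = b j := stIdxAux_spec N w (b j)
      rcases hspec with h | h
      · omega
      · exact h
    have hmin : ∀ q, q < f → w q ≠ b j := fun q hq hqv => (stIdxAux_min hq) (Or.inr hqv)
    have hup : ∀ q, f < q → q < N → w q ≤ w f := fun q hq hqN => P5 f q (le_of_lt hq) hqN
    obtain ⟨hE, hN⟩ := col_spec w (b j) f N hfN hwf hmin hup
    constructor
    · intro i hiN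
      rw [hE i hiN, stArr_succ, ← hw, ← hf, hwf]
    · exact hN
  intro j
  induction j with
  | zero =>
      intro hjM
      obtain ⟨hE, hN⟩ := main 0 hjM
      exact ⟨fun i hi => by rw [faceZ_zero a b i]; exact hE i hi,
             fun i hfi hi => by rw [faceZ_zero a b i]; exact hN i hfi hi⟩
  | succ j ih =>
      intro hjM
      have hjM' : j < M := Nat.lt_of_succ_lt hjM
      obtain ⟨ihE, -⟩ := ih hjM'
      have h0 : ∀ i, i < N → faceZ a b (j + 1) i
          = colStep (stArr a b N (j + 1)) (b (j + 1)) i := by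
        intro i hi
        rw [faceZ_succ a b j i]
        exact colStep_congr _ _ _ i (fun r hr => ihE r (lt_of_le_of_lt hr hi))
      obtain ⟨hE, hN⟩ := main (j + 1) hjM
      exact ⟨fun i hi => by rw [h0 i hi]; exact hE i hi,
             fun i hfi hi => by rw [h0 i hi]; exact hN i hfi hi⟩

end SkewRSAux



open SkewRSAux in
/-- Skew RS map of arrays: let `a ∈ ℤ^N` be weakly decreasing and let `b ∈ ℤ^M` be
the sub-array `b_i = a_{jdx i}` along strictly decreasing positions
`jdx 0 > jdx 1 > ⋯`.  If `(a', b') = RS(a, b)` — i.e. `a' i = E(M,i)` and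
`b' j = N(j,N)` in the edge configuration with west edges `a` and south edges `b` —
then `b' = (b₀+1, …, b_{M-1}+1)` and `a'` agrees with `a` except on a set of `M`
indices `jdx' 0, …, jdx' (M-1)` where `a' (jdx' i) = a (jdx i) + 1`. -/
theorem skewRS_subarray (N M : ℕ) (hM : 0 < M) (a : ℕ → ℤ) (jdx : ℕ → ℕ)
    (ha : ∀ i i', i ≤ i' → i' < N → a i' ≤ a i)
    (hj : ∀ i, i < M → jdx i < N)
    (hjanti : ∀ i i', i < i' → i' < M → jdx i' < jdx i) :
    (∀ i, i < M → (faceZ a (fun t => a (jdx t)) i (N - 1)).2 = a (jdx i) + 1) ∧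
    ∃ jdx' : ℕ → ℕ,
      (∀ i, i < M → jdx' i < N) ∧
      (∀ i i', i < M → i' < M → jdx' i = jdx' i' → i = i') ∧
      (∀ k, k < N → (∀ i, i < M → jdx' i ≠ k) →
        (faceZ a (fun t => a (jdx t)) (M - 1) k).1 = a k) ∧
      (∀ i, i < M →
        (faceZ a (fun t => a (jdx t)) (M - 1) (jdx' i)).1 = a (jdx i) + 1) := by

  have hN : 0 < N := Nat.lt_of_le_of_lt (Nat.zero_le _) (hj 0 hM)
  obtain ⟨P1, P2, P3, P4, P5⟩ := key N M a jdx ha hj hjanti M le_rfl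
  have hface := face_eq N M a jdx ha hj hjanti
  have hM1 : M - 1 < M := by omega
  have hM1' : M - 1 + 1 = M := by omega
  constructor
  · intro i hiM
    exact (hface i hiM).2 (N - 1) (by have := (P1 i hiM).1; omega) (by omega)
  · refine ⟨stIdx a (fun t => a (jdx t)) N, fun i hi => (P1 i hi).1, ?_, ?_, ?_⟩
    · intro i i' hi hi' heq
      by_contra hne
      rcases Nat.lt_or_ge i i' with h | h
      · exact P2 i i' h hi' heq
      · exact P2 i' i (lt_of_le_of_ne h (Ne.symm hne)) hi heq.symm
    · intro k hk hne
      rw [(hface (M - 1) hM1).1 k hk, hM1']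
      exact P3 k hk hne
    · intro i hi
      rw [(hface (M - 1) hM1).1 _ (P1 i hi).1, hM1']
      exact P4 i hi
end

section
/- Transposition of the matrix (inversion of the weighted biword) preserves generalized Greene invariants: for every weighted biword π̄ and every k ≥ 1, I_k(π̄^{-1}) = I_k(π̄) and D_k(π̄^{-1}) = D_k(π̄). -/
open scoped Classical

/-- Cylinder equivalence `(j,i) ∼ (j + mn, i - mn)` on `ℤ²`, defining the twisted
cylinder `𝒞_n = ℤ²/∼`. -/
def cylEq (n : ℕ) (p q : ℤ × ℤ) : Prop :=
  ∃ m : ℤ, q.1 = p.1 + m * n ∧ q.2 = p.2 - m * n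

/-- A weighted biword / matrix `M̄ ∈ 𝕄̄_{n×n}`, seen as a `∼`-invariant point
configuration (with multiplicities) on the twisted cylinder. -/
def cylInv (n : ℕ) (M : ℤ → ℤ → ℕ) : Prop :=
  ∀ x y : ℤ, M (x + n) (y - n) = M x y

/-- Compact support (finitely many points in a fundamental domain). -/
def cylFin (n : ℕ) (M : ℤ → ℤ → ℕ) : Prop :=
  Set.Finite {p : ℤ × ℤ | M p.1 p.2 ≠ 0 ∧ 1 ≤ p.2 ∧ p.2 ≤ (n : ℤ)}

/-- An (infinite) up-right path on the twisted cylinder. -/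
def upRight (n : ℕ) (w : ℤ → ℤ × ℤ) : Prop :=
  ∀ l : ℤ, cylEq n ((w l).1 + 1, (w l).2) (w (l + 1)) ∨
    cylEq n ((w l).1, (w l).2 + 1) (w (l + 1))

/-- The length (number of points, with multiplicity, in a fundamental domain) of an
invariant sub-configuration. -/
noncomputable def clen (n : ℕ) (N : ℤ → ℤ → ℕ) : ℕ∞ :=
  ∑' p : ℤ × ℤ, if 1 ≤ p.2 ∧ p.2 ≤ (n : ℤ) then (N p.1 p.2 : ℕ∞) else 0

/-- An increasing subsequence: an invariant sub-configuration all of whose points lie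
on a common up-right path of the twisted cylinder. -/
def isIncr (n : ℕ) (N : ℤ → ℤ → ℕ) : Prop :=
  cylInv n N ∧ ∃ w : ℤ → ℤ × ℤ, upRight n w ∧
    ∀ x y : ℤ, N x y ≠ 0 → ∃ l : ℤ, cylEq n (x, y) (w l)

/-- A localized decreasing subsequence: a multiplicity-free invariant configuration
whose points form a strict down-right loop winding once around the cylinder
(steps `(a_m, -b_m)` with `1 ≤ a_m, b_m ≤ n`, `∑ a_m = ∑ b_m = n`, and distinct
vertices). -/
def isLDS (n : ℕ) (N : ℤ → ℤ → ℕ) : Prop :=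
  cylInv n N ∧ (∀ x y : ℤ, N x y ≤ 1) ∧
  ∃ (J : ℕ) (c : ℕ → ℤ × ℤ) (a b : ℕ → ℕ), 0 < J ∧
    (∀ m, m < J → 1 ≤ a m ∧ a m ≤ n ∧ 1 ≤ b m ∧ b m ≤ n) ∧
    (∑ m ∈ Finset.range J, a m) = n ∧
    (∑ m ∈ Finset.range J, b m) = n ∧
    (∀ m, m < J →
      cylEq n ((c m).1 + (a m : ℤ), (c m).2 - (b m : ℤ)) (c ((m + 1) % J))) ∧
    (∀ m m', m < J → m' < J → cylEq n (c m) (c m') → m = m') ∧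
    (∀ x y : ℤ, N x y ≠ 0 ↔ ∃ m, m < J ∧ cylEq n (x, y) (c m))

/-- Greene invariant `I_k`: the maximal total length of a disjoint union of `k`
increasing subsequences of `M`. -/
noncomputable def Ikk (n k : ℕ) (M : ℤ → ℤ → ℕ) : ℕ∞ :=
  ⨆ (N : Fin k → ℤ → ℤ → ℕ) (_ : (∀ m, isIncr n (N m)) ∧
      ∀ x y : ℤ, (∑ m, N m x y) ≤ M x y), ∑ m, clen n (N m)

/-- Greene invariant `D_k`: the maximal total length of a disjoint union of `k`
localized decreasing subsequences of `M`. -/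
noncomputable def Dkk (n k : ℕ) (M : ℤ → ℤ → ℕ) : ℕ∞ :=
  ⨆ (N : Fin k → ℤ → ℤ → ℕ) (_ : (∀ m, isLDS n (N m)) ∧
      ∀ x y : ℤ, (∑ m, N m x y) ≤ M x y), ∑ m, clen n (N m)

/-- Transposition of the matrix (inversion `π̄ ↦ π̄⁻¹` of the weighted biword). -/
def transp (M : ℤ → ℤ → ℕ) : ℤ → ℤ → ℕ := fun x y => M y x

/-! ### Auxiliary lemmas -/

lemma cylEq_swap {n : ℕ} {p q : ℤ × ℤ} (h : cylEq n p q) :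
    cylEq n (p.2, p.1) (q.2, q.1) := by
  obtain ⟨m, h1, h2⟩ := h
  refine ⟨-m, ?_, ?_⟩
  · show q.2 = p.2 + -m * (n : ℤ)
    rw [h2]; ring
  · show q.1 = p.1 - -m * (n : ℤ)
    rw [h1]; ring

lemma cylInv_shift {n : ℕ} {N : ℤ → ℤ → ℕ} (h : cylInv n N) (m : ℤ) (x y : ℤ) :
    N (x + m * n) (y - m * n) = N x y := by
  induction m using Int.induction_on with
  | zero => simp
  | succ i ih =>
    have e1 : x + ((i : ℤ) + 1) * n = (x + i * n) + n := by ring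
    have e2 : y - ((i : ℤ) + 1) * n = (y - i * n) - n := by ring
    rw [e1, e2, h (x + i * n) (y - i * n), ih]
  | pred i ih =>
    have hthis := h (x + (-(i : ℤ) - 1) * n) (y - (-(i : ℤ) - 1) * n)
    have e1 : x + (-(i : ℤ) - 1) * n + n = x + (-(i : ℤ)) * n := by ring
    have e2 : y - (-(i : ℤ) - 1) * n - n = y - (-(i : ℤ)) * n := by ring
    rw [e1, e2] at hthis
    exact hthis.symm.trans ih

lemma cylInv_transp {n : ℕ} {N : ℤ → ℤ → ℕ} (h : cylInv n N) : cylInv n (transp N) := by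
  intro x y
  show N (y - n) (x + n) = N y x
  have hthis := h (y - n) (x + n)
  have e1 : y - (n : ℤ) + n = y := by ring
  have e2 : x + (n : ℤ) - n = x := by ring
  rw [e1, e2] at hthis
  exact hthis.symm

/-- Shift amount carrying the `y`-fundamental strip to the `x`-fundamental strip. -/
def Dd (n : ℕ) (x y : ℤ) : ℤ := (x - 1) % n + (y - 1) % n + 2 - x - y

lemma Dd_dvd (n : ℕ) (x y : ℤ) : (n : ℤ) ∣ Dd n x y := by
  refine ⟨-((x - 1) / n) - ((y - 1) / n), ?_⟩
  unfold Dd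
  rw [Int.emod_def, Int.emod_def]
  ring

lemma Dd_shift (n : ℕ) (x y t : ℤ) : Dd n (x + n * t) (y - n * t) = Dd n x y := by
  unfold Dd
  have e1 : x + (n : ℤ) * t - 1 = (x - 1) + t * n := by ring
  have e2 : y - (n : ℤ) * t - 1 = (y - 1) + (-t) * n := by ring
  rw [e1, e2, Int.add_mul_emod_self_right, Int.add_mul_emod_self_right]
  ring

lemma Dd_N {n : ℕ} {N : ℤ → ℤ → ℕ} (h : cylInv n N) (x y : ℤ) :
    N (x + Dd n x y) (y - Dd n x y) = N x y := by
  obtain ⟨t, ht⟩ := Dd_dvd n x y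
  have e : Dd n x y = t * (n : ℤ) := by rw [ht]; ring
  rw [e]
  exact cylInv_shift h t x y

lemma Dd_key {n : ℕ} (hn : 0 < n) (x y : ℤ) :
    (1 ≤ x + Dd n x y ∧ x + Dd n x y ≤ n) ↔ (1 ≤ y ∧ y ≤ (n : ℤ)) := by
  have hn' : (0 : ℤ) < n := by exact_mod_cast hn
  have hA1 : 0 ≤ (x - 1) % (n : ℤ) := Int.emod_nonneg _ (by omega)
  have hA2 : (x - 1) % (n : ℤ) < n := Int.emod_lt_of_pos _ hn'
  have hB1 : 0 ≤ (y - 1) % (n : ℤ) := Int.emod_nonneg _ (by omega)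
  have hB2 : (y - 1) % (n : ℤ) < n := Int.emod_lt_of_pos _ hn'
  have hB := Int.mul_ediv_add_emod (y - 1) (n : ℤ)
  set q : ℤ := (y - 1) / (n : ℤ) with hq
  have hxy : x + Dd n x y = (x - 1) % (n : ℤ) + 1 - (n : ℤ) * q := by
    unfold Dd; linarith
  constructor
  · rintro ⟨h1, h2⟩
    rw [hxy] at h1 h2
    have hq1 : q < 1 := by
      refine lt_of_mul_lt_mul_left (a := (n : ℤ)) ?_ (le_of_lt hn')
      have : (n : ℤ) * q ≤ (x - 1) % (n : ℤ) := by linarith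
      linarith
    have hq2 : -1 < q := by
      refine lt_of_mul_lt_mul_left (a := (n : ℤ)) ?_ (le_of_lt hn')
      have : (x - 1) % (n : ℤ) + 1 - (n : ℤ) ≤ (n : ℤ) * q := by linarith
      linarith
    have hq0 : q = 0 := by omega
    rw [hq0] at hB
    constructor
    · linarith
    · have : y - 1 < (n : ℤ) := by linarith
      exact Int.lt_add_one_iff.mp (by linarith)
  · rintro ⟨hy1, hy2⟩
    have hq1 : q < 1 := by
      refine lt_of_mul_lt_mul_left (a := (n : ℤ)) ?_ (le_of_lt hn')
      have : (n : ℤ) * q = y - 1 - (y - 1) % (n : ℤ) := by linarith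
      linarith
    have hq2 : -1 < q := by
      refine lt_of_mul_lt_mul_left (a := (n : ℤ)) ?_ (le_of_lt hn')
      have : (n : ℤ) * q = y - 1 - (y - 1) % (n : ℤ) := by linarith
      linarith
    have hq0 : q = 0 := by omega
    rw [hxy, hq0]
    constructor
    · linarith
    · have := Int.lt_iff_add_one_le.mp hA2
      linarith

/-- The strip-exchanging equivalence of `ℤ²`. -/
noncomputable def stripEquiv (n : ℕ) : ℤ × ℤ ≃ ℤ × ℤ where
  toFun p := (p.1 + Dd n p.1 p.2, p.2 - Dd n p.1 p.2)
  invFun p := (p.1 - Dd n p.1 p.2, p.2 + Dd n p.1 p.2)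
  left_inv p := by
    obtain ⟨t, ht⟩ := Dd_dvd n p.1 p.2
    have hDD : Dd n (p.1 + Dd n p.1 p.2) (p.2 - Dd n p.1 p.2) = Dd n p.1 p.2 := by
      rw [ht, Dd_shift n p.1 p.2 t]; exact ht
    show (p.1 + Dd n p.1 p.2 - Dd n (p.1 + Dd n p.1 p.2) (p.2 - Dd n p.1 p.2),
          p.2 - Dd n p.1 p.2 + Dd n (p.1 + Dd n p.1 p.2) (p.2 - Dd n p.1 p.2)) = p
    rw [hDD]
    simp
  right_inv p := by
    obtain ⟨t, ht⟩ := Dd_dvd n p.1 p.2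
    have hDD : Dd n (p.1 - Dd n p.1 p.2) (p.2 + Dd n p.1 p.2) = Dd n p.1 p.2 := by
      have e1 : p.1 - Dd n p.1 p.2 = p.1 + (n : ℤ) * (-t) := by rw [ht]; ring
      have e2 : p.2 + Dd n p.1 p.2 = p.2 - (n : ℤ) * (-t) := by rw [ht]; ring
      rw [e1, e2, Dd_shift]
    show (p.1 - Dd n p.1 p.2 + Dd n (p.1 - Dd n p.1 p.2) (p.2 + Dd n p.1 p.2),
          p.2 + Dd n p.1 p.2 - Dd n (p.1 - Dd n p.1 p.2) (p.2 + Dd n p.1 p.2)) = p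
    rw [hDD]
    simp

lemma clen_transp {n : ℕ} (hn : 0 < n) {N : ℤ → ℤ → ℕ} (h : cylInv n N) :
    clen n (transp N) = clen n N := by
  have step1 : clen n (transp N)
      = ∑' p : ℤ × ℤ, (if 1 ≤ p.1 ∧ p.1 ≤ (n : ℤ) then (N p.1 p.2 : ℕ∞) else 0) := by
    rw [← Equiv.tsum_eq (Equiv.prodComm ℤ ℤ)
      (fun p : ℤ × ℤ => if 1 ≤ p.1 ∧ p.1 ≤ (n : ℤ) then (N p.1 p.2 : ℕ∞) else 0)]
    rfl
  rw [step1,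
    ← Equiv.tsum_eq (stripEquiv n)
      (fun p : ℤ × ℤ => if 1 ≤ p.1 ∧ p.1 ≤ (n : ℤ) then (N p.1 p.2 : ℕ∞) else 0)]
  unfold clen
  apply tsum_congr
  intro p
  show (if 1 ≤ p.1 + Dd n p.1 p.2 ∧ p.1 + Dd n p.1 p.2 ≤ (n : ℤ) then
      (N (p.1 + Dd n p.1 p.2) (p.2 - Dd n p.1 p.2) : ℕ∞) else 0)
    = (if 1 ≤ p.2 ∧ p.2 ≤ (n : ℤ) then (N p.1 p.2 : ℕ∞) else 0)
  rw [Dd_N h p.1 p.2]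
  exact if_congr (Dd_key hn p.1 p.2) rfl rfl

lemma isIncr_transp {n : ℕ} {N : ℤ → ℤ → ℕ} (h : isIncr n N) : isIncr n (transp N) := by
  obtain ⟨hinv, w, hw, hmem⟩ := h
  refine ⟨cylInv_transp hinv, fun l => ((w l).2, (w l).1), fun l => ?_, fun x y hxy => ?_⟩
  · rcases hw l with h1 | h2
    · exact Or.inr (cylEq_swap h1)
    · exact Or.inl (cylEq_swap h2)
  · obtain ⟨l, hl⟩ := hmem y x hxy
    exact ⟨l, cylEq_swap hl⟩

lemma isLDS_transp {n : ℕ} {N : ℤ → ℤ → ℕ} (h : isLDS n N) : isLDS n (transp N) := by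
  obtain ⟨hinv, hfree, J, c, a, b, hJ, hab, hsa, hsb, hstep, hdist, hmem⟩ := h
  have hfval : ∀ m, m < J → (2 * J - 2 - m) % J = if m + 1 = J then J - 1 else J - 2 - m := by
    intro m hm
    by_cases h1 : m + 1 = J
    · rw [if_pos h1]
      have e : 2 * J - 2 - m = J - 1 := by omega
      rw [e, Nat.mod_eq_of_lt (by omega)]
    · rw [if_neg h1]
      have e : 2 * J - 2 - m = J + (J - 2 - m) := by omega
      rw [e, Nat.add_mod_left, Nat.mod_eq_of_lt (by omega)]
  have hflt : ∀ m, m < J → (2 * J - 2 - m) % J < J := fun m _ => Nat.mod_lt _ hJ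
  have hsum : ∀ g : ℕ → ℕ,
      ∑ m ∈ Finset.range J, g ((2 * J - 2 - m) % J) = ∑ m ∈ Finset.range J, g m := by
    intro g
    refine Finset.sum_nbij' (fun m => (2 * J - 2 - m) % J) (fun m => (2 * J - 2 - m) % J)
      ?_ ?_ ?_ ?_ ?_
    · intro m hm
      exact Finset.mem_range.mpr (hflt m (Finset.mem_range.mp hm))
    · intro m hm
      exact Finset.mem_range.mpr (hflt m (Finset.mem_range.mp hm))
    · intro m hm
      have hm' := Finset.mem_range.mp hm
      show (2 * J - 2 - (2 * J - 2 - m) % J) % J = m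
      rw [hfval m hm']
      by_cases h1 : m + 1 = J
      · rw [if_pos h1, hfval (J - 1) (by omega), if_pos (by omega)]
        omega
      · rw [if_neg h1, hfval (J - 2 - m) (by omega), if_neg (by omega)]
        omega
    · intro m hm
      have hm' := Finset.mem_range.mp hm
      show (2 * J - 2 - (2 * J - 2 - m) % J) % J = m
      rw [hfval m hm']
      by_cases h1 : m + 1 = J
      · rw [if_pos h1, hfval (J - 1) (by omega), if_pos (by omega)]
        omega
      · rw [if_neg h1, hfval (J - 2 - m) (by omega), if_neg (by omega)]
        omega
    · intro m hm
      rfl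
  refine ⟨cylInv_transp hinv, fun x y => hfree y x, J,
    fun m => ((c (J - 1 - m)).2, (c (J - 1 - m)).1),
    fun m => b ((2 * J - 2 - m) % J), fun m => a ((2 * J - 2 - m) % J),
    hJ, ?_, ?_, ?_, ?_, ?_, ?_⟩
  · intro m hm
    obtain ⟨h1, h2, h3, h4⟩ := hab _ (hflt m hm)
    exact ⟨h3, h4, h1, h2⟩
  · rw [hsum b]; exact hsb
  · rw [hsum a]; exact hsa
  · intro m hm
    have hj'J : (2 * J - 2 - m) % J < J := hflt m hm
    have hnext : ((2 * J - 2 - m) % J + 1) % J = J - 1 - m := by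
      rw [hfval m hm]
      by_cases h1 : m + 1 = J
      · rw [if_pos h1]
        have e : J - 1 + 1 = J := by omega
        rw [e, Nat.mod_self]
        omega
      · rw [if_neg h1, Nat.mod_eq_of_lt (by omega)]
        omega
    have hcn : J - 1 - (m + 1) % J = (2 * J - 2 - m) % J := by
      rw [hfval m hm]
      by_cases h1 : m + 1 = J
      · rw [if_pos h1, h1, Nat.mod_self]
        omega
      · rw [if_neg h1, Nat.mod_eq_of_lt (by omega)]
        omega
    obtain ⟨m0, he1, he2⟩ := hstep _ hj'J
    rw [hnext] at he1 he2
    have he1' : (c (J - 1 - m)).1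
        = (c ((2 * J - 2 - m) % J)).1 + (a ((2 * J - 2 - m) % J) : ℤ) + m0 * (n : ℤ) := he1
    have he2' : (c (J - 1 - m)).2
        = (c ((2 * J - 2 - m) % J)).2 - (b ((2 * J - 2 - m) % J) : ℤ) - m0 * (n : ℤ) := he2
    refine ⟨m0, ?_, ?_⟩
    · show (c (J - 1 - (m + 1) % J)).2
        = (c (J - 1 - m)).2 + (b ((2 * J - 2 - m) % J) : ℤ) + m0 * (n : ℤ)
      rw [hcn]
      linarith [he2']
    · show (c (J - 1 - (m + 1) % J)).1
        = (c (J - 1 - m)).1 - (a ((2 * J - 2 - m) % J) : ℤ) - m0 * (n : ℤ)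
      rw [hcn]
      linarith [he1']
  · intro m m' hm hm' hEq
    have := hdist (J - 1 - m) (J - 1 - m') (by omega) (by omega) (cylEq_swap hEq)
    omega
  · intro x y
    rw [show transp N x y = N y x from rfl, hmem y x]
    constructor
    · rintro ⟨i, hi, hci⟩
      refine ⟨J - 1 - i, by omega, ?_⟩
      have e : J - 1 - (J - 1 - i) = i := by omega
      show cylEq n (x, y) ((c (J - 1 - (J - 1 - i))).2, (c (J - 1 - (J - 1 - i))).1)
      rw [e]
      exact cylEq_swap hci
    · rintro ⟨m, hm, hcm⟩
      exact ⟨J - 1 - m, by omega, cylEq_swap hcm⟩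

lemma Ikk_transp_le (n k : ℕ) (hn : 0 < n) (M : ℤ → ℤ → ℕ) :
    Ikk n k (transp M) ≤ Ikk n k M := by
  unfold Ikk
  refine iSup_le fun N => iSup_le fun hN => ?_
  obtain ⟨hincr, hle⟩ := hN
  have h1 : ∀ m, isIncr n (transp (N m)) := fun m => isIncr_transp (hincr m)
  have h2 : ∀ x y : ℤ, (∑ m, transp (N m) x y) ≤ M x y := fun x y => hle y x
  have h3 : (∑ m, clen n (N m)) = ∑ m, clen n (transp (N m)) :=
    Finset.sum_congr rfl fun m _ => (clen_transp hn (hincr m).1).symm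
  rw [h3]
  exact le_iSup₂ (f := fun (N' : Fin k → ℤ → ℤ → ℕ)
    (_ : (∀ m, isIncr n (N' m)) ∧ ∀ x y : ℤ, (∑ m, N' m x y) ≤ M x y) =>
    ∑ m, clen n (N' m)) (fun m => transp (N m)) ⟨h1, h2⟩

lemma Dkk_transp_le (n k : ℕ) (hn : 0 < n) (M : ℤ → ℤ → ℕ) :
    Dkk n k (transp M) ≤ Dkk n k M := by
  unfold Dkk
  refine iSup_le fun N => iSup_le fun hN => ?_
  obtain ⟨hlds, hle⟩ := hN
  have h1 : ∀ m, isLDS n (transp (N m)) := fun m => isLDS_transp (hlds m)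
  have h2 : ∀ x y : ℤ, (∑ m, transp (N m) x y) ≤ M x y := fun x y => hle y x
  have h3 : (∑ m, clen n (N m)) = ∑ m, clen n (transp (N m)) :=
    Finset.sum_congr rfl fun m _ => (clen_transp hn (hlds m).1).symm
  rw [h3]
  exact le_iSup₂ (f := fun (N' : Fin k → ℤ → ℤ → ℕ)
    (_ : (∀ m, isLDS n (N' m)) ∧ ∀ x y : ℤ, (∑ m, N' m x y) ≤ M x y) =>
    ∑ m, clen n (N' m)) (fun m => transp (N m)) ⟨h1, h2⟩

/-- Inversion of the weighted biword (transposition of the matrix) preserves the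
generalized Greene invariants `I_k` and `D_k` for every `k ≥ 1`. -/
theorem transpose_preserves_greene (n : ℕ) (hn : 0 < n) (M : ℤ → ℤ → ℕ)
    (hinv : cylInv n M) (hfin : cylFin n M) (k : ℕ) (hk : 1 ≤ k) :
    Ikk n k (transp M) = Ikk n k M ∧ Dkk n k (transp M) = Dkk n k M := by
  exact ⟨le_antisymm (Ikk_transp_le n k hn M) (Ikk_transp_le n k hn (transp M)),
    le_antisymm (Dkk_transp_le n k hn M) (Dkk_transp_le n k hn (transp M))⟩
end
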